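/- Fix an integer n ≥ 2, set d := 2n+2, and let q(n) := (1, 1, …, 1, 3n, 10n, 15n) ∈ ℤ^d (with 2n−1 entries equal to 1). Then the simplex Δ := conv{e_1, …, e_d, −q(n)} ⊆ ℝ^d is reflexive: it contains the origin in its interior, and its polar dual Δ° := {y ∈ ℝ^d : ⟨x, y⟩ ≤ 1 for all x ∈ Δ} is a lattice polytope, i.e., Δ° is the convex hull of a finite set of points of ℤ^d. -/

import Mathlib

open scoped BigOperators Pointwise

/-- The vector `q(n) = (1,…,1,3n,10n,15n) ∈ ℤ^{2n+2}` with `2n-1` ones. -/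
def qvec (n : ℕ) : Fin (2 * n + 2) → ℤ := fun i =>
  if (i : ℕ) < 2 * n - 1 then 1
  else if (i : ℕ) = 2 * n - 1 then 3 * n
  else if (i : ℕ) = 2 * n then 10 * n
  else 15 * n

/-- The simplex `Δ_{(1,q(n))} = conv{e_1, …, e_d, -q(n)} ⊆ ℝ^{2n+2}`. -/
noncomputable def deltaQ (n : ℕ) : Set (Fin (2 * n + 2) → ℝ) :=
  convexHull ℝ
    ((Set.range fun i : Fin (2 * n + 2) => fun j : Fin (2 * n + 2) =>
        if j = i then (1 : ℝ) else 0) ∪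
      {fun i => -(qvec n i : ℝ)})

def rvec (n : ℕ) : Fin (2 * n + 2) → ℤ := fun i =>
  if (i : ℕ) < 2 * n - 1 then 30 * n
  else if (i : ℕ) = 2 * n - 1 then 10
  else if (i : ℕ) = 2 * n then 3
  else 2

lemma qvec_pos (n : ℕ) (hn : 2 ≤ n) (i : Fin (2*n+2)) : (1:ℤ) ≤ qvec n i := by
  unfold qvec; split_ifs <;> omega

lemma rvec_pos (n : ℕ) (hn : 2 ≤ n) (i : Fin (2*n+2)) : (1:ℤ) ≤ rvec n i := by
  unfold rvec; split_ifs <;> omega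

lemma q_mul_r (n : ℕ) (i : Fin (2*n+2)) : qvec n i * rvec n i = 30 * n := by
  unfold qvec rvec; split_ifs <;> ring

lemma sum_qvec (n : ℕ) (hn : 2 ≤ n) : ∑ i, qvec n i = 30 * (n:ℤ) - 1 := by
  have h2 : ∑ i, qvec n i = ∑ j ∈ Finset.range (2*n+2), (if j < 2 * n - 1 then (1:ℤ)
    else if j = 2 * n - 1 then 3 * n
    else if j = 2 * n then 10 * n
    else 15 * n) := Fin.sum_univ_eq_sum_range (fun j => if j < 2 * n - 1 then (1:ℤ)
    else if j = 2 * n - 1 then 3 * n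
    else if j = 2 * n then 10 * n
    else 15 * n) (2*n+2)
  rw [h2]
  rw [show 2*n+2 = (2*n-1)+1+1+1 by omega]
  rw [Finset.sum_range_succ, Finset.sum_range_succ, Finset.sum_range_succ]
  have hc : ∑ x ∈ Finset.range (2*n-1), (if x < 2 * n - 1 then (1:ℤ)
    else if x = 2 * n - 1 then 3 * n
    else if x = 2 * n then 10 * n
    else 15 * n) = ((2*n-1 : ℕ) : ℤ) := by
    rw [Finset.sum_congr rfl (fun i hi => if_pos (Finset.mem_range.mp hi))]
    simp
  rw [hc]
  split_ifs <;> push_cast <;> omega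

lemma sum_mul_ite {d : ℕ} (g : Fin d → ℝ) (k : Fin d) (c : ℝ) :
    ∑ i, g i * (if i = k then c else 1) = (∑ i, g i) + g k * (c - 1) := by
  have h : ∀ i, g i * (if i = k then c else 1) = g i + (if i = k then g k * (c - 1) else 0) := by
    intro i
    split_ifs with hik
    · subst hik; ring
    · ring
  rw [Finset.sum_congr rfl (fun i _ => h i), Finset.sum_add_distrib,
    Finset.sum_ite_eq' Finset.univ k (fun _ => g k * (c-1)), if_pos (Finset.mem_univ k)]

def Pset (n : ℕ) : Set (Fin (2 * n + 2) → ℝ) :=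
  {y | (∀ i, y i ≤ 1) ∧ ∑ i, (-(qvec n i : ℝ)) * y i ≤ 1}

lemma halfspace_convex {d : ℕ} (y : Fin d → ℝ) :
    Convex ℝ {x : Fin d → ℝ | ∑ i, x i * y i ≤ 1} := by
  have : IsLinearMap ℝ (fun x : Fin d → ℝ => ∑ i, x i * y i) := by
    constructor
    · intro a b; simp [add_mul, Finset.sum_add_distrib]
    · intro c a; simp [Finset.mul_sum, mul_assoc]
  exact convex_halfSpace_le this 1

lemma polar_eq_P (n : ℕ) :
    {y : Fin (2 * n + 2) → ℝ | ∀ x ∈ deltaQ n, ∑ i, x i * y i ≤ 1} = Pset n := by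
  ext y
  simp only [Set.mem_setOf_eq, Pset]
  constructor
  · intro h
    constructor
    · intro k
      have hk := h _ (subset_convexHull ℝ _ (Set.mem_union_left _ ⟨k, rfl⟩))
      simpa using hk
    · have hq := h _ (subset_convexHull ℝ _ (Set.mem_union_right _ rfl))
      exact hq
  · rintro ⟨h1, h2⟩ x hx
    have : deltaQ n ⊆ {x : Fin (2*n+2) → ℝ | ∑ i, x i * y i ≤ 1} := by
      apply convexHull_min _ (halfspace_convex y)
      rintro x (⟨k, rfl⟩ | rfl)
      · simpa using h1 k
      · exact h2
    exact this hx

lemma sum_mul_ite2 {d : ℕ} (g : Fin d → ℝ) (j : Fin d) (c : Fin d → ℝ) :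
    ∑ k, g k * (if j = k then c k else 1) = (∑ k, g k) + g j * (c j - 1) := by
  have h : ∀ k, g k * (if j = k then c k else 1) = g k + (if k = j then g j * (c j - 1) else 0) := by
    intro k
    by_cases hk : k = j
    · subst hk; rw [if_pos rfl, if_pos rfl]; ring
    · rw [if_neg hk, if_neg (fun h => hk h.symm)]; ring
  rw [Finset.sum_congr rfl (fun k _ => h k), Finset.sum_add_distrib,
    Finset.sum_ite_eq' Finset.univ j (fun _ => g j * (c j - 1)), if_pos (Finset.mem_univ j)]

/-- integer vertices of the dual simplex -/
def wZ (n : ℕ) : Option (Fin (2 * n + 2)) → (Fin (2 * n + 2) → ℤ)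
  | none => fun _ => 1
  | some k => fun i => if i = k then 1 - rvec n k else 1

noncomputable def wR (n : ℕ) (o : Option (Fin (2 * n + 2))) : Fin (2 * n + 2) → ℝ :=
  fun i => ((wZ n o i : ℤ) : ℝ)

lemma convex_Pset (n : ℕ) : Convex ℝ (Pset n) := by
  have h1 : Convex ℝ {y : Fin (2*n+2) → ℝ | ∀ i, y i ≤ 1} := by
    intro a ha b hb s t hs ht hst
    intro i
    have := ha i; have := hb i
    simp only [Pi.add_apply, Pi.smul_apply, smul_eq_mul]
    nlinarith
  have h2 : Convex ℝ {y : Fin (2*n+2) → ℝ | ∑ i, (-(qvec n i : ℝ)) * y i ≤ 1} := by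
    have he : {y : Fin (2*n+2) → ℝ | ∑ i, (-(qvec n i : ℝ)) * y i ≤ 1}
        = {y : Fin (2*n+2) → ℝ | ∑ i, y i * (-(qvec n i : ℝ)) ≤ 1} := by
      simp only [mul_comm]
    rw [he]
    exact halfspace_convex _
  exact h1.inter h2

lemma qR_pos (n : ℕ) (hn : 2 ≤ n) (i : Fin (2*n+2)) : (1:ℝ) ≤ (qvec n i : ℝ) := by
  exact_mod_cast qvec_pos n hn i

lemma rR_pos (n : ℕ) (hn : 2 ≤ n) (i : Fin (2*n+2)) : (1:ℝ) ≤ (rvec n i : ℝ) := by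
  exact_mod_cast rvec_pos n hn i

lemma qrR (n : ℕ) (i : Fin (2*n+2)) : (qvec n i : ℝ) * (rvec n i : ℝ) = 30 * n := by
  exact_mod_cast q_mul_r n i

lemma sum_qR (n : ℕ) (hn : 2 ≤ n) : ∑ i, (qvec n i : ℝ) = 30 * (n:ℝ) - 1 := by
  exact_mod_cast sum_qvec n hn

lemma P_eq_hull (n : ℕ) (hn : 2 ≤ n) :
    Pset n = convexHull ℝ (Set.range (wR n)) := by
  have hn0 : (0:ℝ) < (n:ℝ) := by positivity
  have hm0 : (0:ℝ) < 30 * (n:ℝ) := by positivity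
  apply Set.eq_of_subset_of_subset
  · -- Pset ⊆ hull
    intro y hy
    obtain ⟨h1, h2⟩ := hy
    have h2' : -(∑ i, (qvec n i : ℝ) * y i) ≤ 1 := by
      rw [← Finset.sum_neg_distrib]
      simpa [neg_mul] using h2
    set w : Option (Fin (2*n+2)) → ℝ := fun o =>
      match o with
      | none => (1 + ∑ i, (qvec n i : ℝ) * y i) / (30 * (n:ℝ))
      | some k => (qvec n k : ℝ) * (1 - y k) / (30 * (n:ℝ)) with hw
    have hwnn : ∀ o ∈ (Finset.univ : Finset (Option (Fin (2*n+2)))), 0 ≤ w o := by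
      rintro (_ | k) -
      · apply div_nonneg _ hm0.le
        linarith
      · apply div_nonneg _ hm0.le
        have := h1 k
        have := qR_pos n hn k
        nlinarith
    have hwsum : ∑ o, w o = 1 := by
      rw [Fintype.sum_option]
      have : ∑ k, w (some k) = (∑ k, (qvec n k : ℝ) * (1 - y k)) / (30 * (n:ℝ)) := by
        rw [Finset.sum_div]
      rw [this]
      have hexp : ∑ k, (qvec n k : ℝ) * (1 - y k)
          = (∑ k, (qvec n k : ℝ)) - ∑ k, (qvec n k : ℝ) * y k := by
        rw [← Finset.sum_sub_distrib]
        congr 1; funext k; ring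
      rw [hexp, sum_qR n hn]
      show (1 + ∑ i, (qvec n i : ℝ) * y i) / (30 * (n:ℝ)) + _ = 1
      field_simp
      ring
    have hz : ∀ o ∈ (Finset.univ : Finset (Option (Fin (2*n+2)))), wR n o ∈ Set.range (wR n) :=
      fun o _ => ⟨o, rfl⟩
    have hcm := Finset.centerMass_mem_convexHull Finset.univ hwnn
      (by rw [hwsum]; norm_num) hz
    have heq : Finset.univ.centerMass w (wR n) = y := by
      rw [Finset.centerMass_eq_of_sum_1 _ _ hwsum]
      funext j
      rw [Finset.sum_apply]
      simp only [Pi.smul_apply, smul_eq_mul]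
      rw [Fintype.sum_option]
      have hbody : ∀ k, w (some k) * wR n (some k) j
          = w (some k) * (if j = k then 1 - (rvec n k : ℝ) else 1) := by
        intro k
        congr 1
        simp only [wR, wZ]
        split_ifs <;> push_cast <;> ring
      rw [Finset.sum_congr rfl (fun k _ => hbody k)]
      rw [sum_mul_ite2 (fun k => w (some k)) j (fun k => 1 - (rvec n k : ℝ))]
      have hwj : w (some j) * ((1 - (rvec n j : ℝ)) - 1) = -(1 - y j) := by
        show (qvec n j : ℝ) * (1 - y j) / (30 * (n:ℝ)) * ((1 - (rvec n j : ℝ)) - 1) = -(1 - y j)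
        have hq := qrR n j
        field_simp
        linear_combination (y j - 1) * hq
      have hsum_opt : w none * wR n none j + (∑ k, w (some k)) = ∑ o, w o := by
        rw [Fintype.sum_option]
        simp [wR, wZ]
      calc w none * wR n none j + ((∑ k, w (some k)) + w (some j) * ((1 - (rvec n j : ℝ)) - 1))
          = (w none * wR n none j + ∑ k, w (some k)) + w (some j) * ((1 - (rvec n j : ℝ)) - 1) := by ring
        _ = 1 + -(1 - y j) := by rw [hsum_opt, hwsum, hwj]
        _ = y j := by ring
    rw [← heq]
    exact hcm
  · -- hull ⊆ Pset
    apply convexHull_min _ (convex_Pset n)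
    rintro y ⟨o, rfl⟩
    match o with
    | none =>
      constructor
      · intro i; simp [wR, wZ]
      · simp only [wR, wZ, Int.cast_one, mul_one]
        rw [Finset.sum_neg_distrib, sum_qR n hn]
        nlinarith
    | some k =>
      constructor
      · intro i
        simp only [wR, wZ]
        split_ifs
        · push_cast
          have := rR_pos n hn k
          linarith
        · norm_num
      · have hbody : ∀ i, (-(qvec n i : ℝ)) * wR n (some k) i
            = -((qvec n i : ℝ) * (if i = k then 1 - (rvec n k : ℝ) else 1)) := by
          intro i
          simp only [wR, wZ]
          split_ifs <;> push_cast <;> ring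
        rw [Finset.sum_congr rfl (fun i _ => hbody i), Finset.sum_neg_distrib]
        rw [sum_mul_ite (fun i => (qvec n i : ℝ)) k (1 - (rvec n k : ℝ))]
        rw [sum_qR n hn]
        have := qrR n k
        nlinarith

lemma zero_mem_interior (n : ℕ) (hn : 2 ≤ n) :
    (0 : Fin (2 * n + 2) → ℝ) ∈ interior (deltaQ n) := by
  have hn' : (2:ℝ) ≤ (n:ℝ) := by exact_mod_cast hn
  have hn0 : (0:ℝ) < (n:ℝ) := by linarith
  set ε : ℝ := 1 / (64 * (n:ℝ)) with hε
  have hε0 : 0 < ε := by positivity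
  have hsub : Metric.ball (0 : Fin (2 * n + 2) → ℝ) ε ⊆ deltaQ n := by
    intro x hx
    rw [Metric.mem_ball, dist_zero_right] at hx
    have hxi : ∀ i, |x i| ≤ ε := fun i =>
      le_of_lt (lt_of_le_of_lt (norm_le_pi_norm x i) hx)
    have hcard : (Finset.univ : Finset (Fin (2*n+2))).card = 2*n+2 := by
      simp
    have hS : |∑ i, x i| ≤ 3/64 := by
      have h1 : |∑ i, x i| ≤ ∑ i, |x i| := Finset.abs_sum_le_sum_abs _ _
      have h2 : ∑ i, |x i| ≤ (2*n+2 : ℕ) * ε := by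
        calc ∑ i, |x i| ≤ ∑ _i : Fin (2*n+2), ε := Finset.sum_le_sum (fun i _ => hxi i)
          _ = (2*n+2 : ℕ) * ε := by
              rw [Finset.sum_const, hcard, nsmul_eq_mul]
      have h3 : ((2*n+2 : ℕ) : ℝ) * ε ≤ 3/64 := by
        have hcast : ((2*n+2 : ℕ) : ℝ) ≤ 3 * (n:ℝ) := by push_cast; linarith
        rw [hε]
        rw [mul_one_div, div_le_div_iff₀ (by positivity) (by norm_num)]
        nlinarith
      linarith
    have hS' : ∑ i, x i ≤ 3/64 := (abs_le.mp hS).2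
    set t : ℝ := (1 - ∑ i, x i) / (30 * (n:ℝ)) with htdef
    have htε : ε ≤ t := by
      rw [hε, htdef, div_le_div_iff₀ (by positivity) (by positivity)]
      nlinarith [mul_le_mul_of_nonneg_right
        (by linarith : (61/64 : ℝ) ≤ 1 - ∑ i, x i) (by positivity : (0:ℝ) ≤ 64 * (n:ℝ))]
    have ht0 : 0 ≤ t := le_trans hε0.le htε
    set μ : Option (Fin (2*n+2)) → ℝ := fun o =>
      match o with
      | none => t
      | some i => x i + (qvec n i : ℝ) * t with hμ
    have hμnn : ∀ o ∈ (Finset.univ : Finset (Option (Fin (2*n+2)))), 0 ≤ μ o := by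
      rintro (_ | i) -
      · exact ht0
      · show 0 ≤ x i + (qvec n i : ℝ) * t
        have h1 : t ≤ (qvec n i : ℝ) * t :=
          le_mul_of_one_le_left ht0 (qR_pos n hn i)
        have h2 : -ε ≤ x i := neg_le_of_abs_le (hxi i)
        linarith
    have hμsum : ∑ o, μ o = 1 := by
      rw [Fintype.sum_option]
      show t + ∑ i, (x i + (qvec n i : ℝ) * t) = 1
      rw [Finset.sum_add_distrib, ← Finset.sum_mul, sum_qR n hn, htdef]
      field_simp
      ring
    set p : Option (Fin (2*n+2)) → (Fin (2*n+2) → ℝ) := fun o =>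
      match o with
      | none => fun i => -(qvec n i : ℝ)
      | some i => fun j => if j = i then (1:ℝ) else 0 with hp
    have hz : ∀ o ∈ (Finset.univ : Finset (Option (Fin (2*n+2)))), p o ∈
        ((Set.range fun i : Fin (2 * n + 2) => fun j : Fin (2 * n + 2) =>
          if j = i then (1 : ℝ) else 0) ∪ {fun i => -(qvec n i : ℝ)}) := by
      rintro (_ | i) -
      · exact Set.mem_union_right _ rfl
      · exact Set.mem_union_left _ ⟨i, rfl⟩
    have hcm := Finset.centerMass_mem_convexHull Finset.univ hμnn
      (by rw [hμsum]; norm_num) hz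
    have heq : Finset.univ.centerMass μ p = x := by
      rw [Finset.centerMass_eq_of_sum_1 _ _ hμsum]
      funext j
      rw [Finset.sum_apply]
      simp only [Pi.smul_apply, smul_eq_mul]
      rw [Fintype.sum_option]
      have h1 : ∑ i, μ (some i) * p (some i) j = μ (some j) := by
        have : ∀ i, μ (some i) * p (some i) j = if j = i then μ (some i) else 0 := by
          intro i
          show μ (some i) * (if j = i then (1:ℝ) else 0) = _
          split_ifs <;> ring
        rw [Finset.sum_congr rfl (fun i _ => this i), Finset.sum_ite_eq Finset.univ j,
          if_pos (Finset.mem_univ j)]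
      rw [h1]
      show t * (-(qvec n j : ℝ)) + (x j + (qvec n j : ℝ) * t) = x j
      ring
    rw [← heq]
    exact hcm
  exact mem_interior.mpr ⟨Metric.ball 0 ε, hsub, Metric.isOpen_ball, Metric.mem_ball_self hε0⟩


theorem stmt6 (n : ℕ) (hn : 2 ≤ n) :
    (0 : Fin (2 * n + 2) → ℝ) ∈ interior (deltaQ n) ∧
    ∃ V : Finset (Fin (2 * n + 2) → ℤ),
      {y : Fin (2 * n + 2) → ℝ | ∀ x ∈ deltaQ n, ∑ i, x i * y i ≤ 1} =
        convexHull ℝ ((fun v : Fin (2 * n + 2) → ℤ => fun i => (v i : ℝ)) '' ↑V) := by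
  refine ⟨zero_mem_interior n hn, Finset.image (wZ n) Finset.univ, ?_⟩
  rw [polar_eq_P n, P_eq_hull n hn]
  congr 1
  rw [Finset.coe_image, Finset.coe_univ, Set.image_univ, ← Set.range_comp]
  rfl
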